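/- For the principal point x_m = x_0 + (1/m)ρ̌ in the twisted affine apartment of (R, ϑ), the Kac coordinates are s_i = 1 for all i = 1, …, ℓ_ϑ and s_0 = 1 + (m − h_ϑ)/e, where h_ϑ = e·(b_0 + b_1 + ⋯ + b_{ℓ_ϑ}) is the twisted Coxeter number and e is the order of ϑ. In particular s_0 = 1 when m = h_ϑ. -/

import Mathlib

/-- For the principal point `x_m = x_0 + (1/m)ρ̌` in the
twisted affine apartment of `(R, ϑ)` (realised with basepoint `x_0 = 0`, so the
simple affine roots `ψ_i`, `i ≥ 1`, are linear with `ψ_i(ρ̌) = 1` and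
`Σ b_i ψ_i = 1/e`), the Kac coordinates `s_i = m·ψ_i(x_m)` are `s_i = 1` for
`i = 1, …, ℓ_ϑ` and `s_0 = 1 + (m − h_ϑ)/e`, where
`h_ϑ = e·(b_0 + ⋯ + b_{ℓ_ϑ})` is the twisted Coxeter number.  In particular
`s_0 = 1` when `m = h_ϑ`. -/
theorem principal_point_kac_coordinates
    {V : Type*} [AddCommGroup V] [Module ℝ V]
    (ℓ : ℕ) (b : Fin (ℓ + 1) → ℕ) (ψ : Fin (ℓ + 1) → V → ℝ)
    (ρ : V) (e m : ℕ) (he : 0 < e) (hm : 0 < m) (hem : e ∣ m)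
    (hb0 : b 0 = 1)
    (hlin : ∀ i : Fin (ℓ + 1), i ≠ 0 → IsLinearMap ℝ (ψ i))
    (hval : ∀ i : Fin (ℓ + 1), i ≠ 0 → ψ i ρ = 1)
    (hrel : ∀ v : V, ∑ i, (b i : ℝ) * ψ i v = 1 / e) :
    (∀ i : Fin (ℓ + 1), i ≠ 0 → (m : ℝ) * ψ i ((m : ℝ)⁻¹ • ρ) = 1) ∧
    (m : ℝ) * ψ 0 ((m : ℝ)⁻¹ • ρ) =
      1 + ((m : ℝ) - (e : ℝ) * ∑ i, (b i : ℝ)) / e ∧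
    (m = e * ∑ i, b i → (m : ℝ) * ψ 0 ((m : ℝ)⁻¹ • ρ) = 1) := by
  have hmR : (m : ℝ) ≠ 0 := Nat.cast_ne_zero.mpr hm.ne'
  have heR : (e : ℝ) ≠ 0 := Nat.cast_ne_zero.mpr he.ne'
  have hv : ∀ i : Fin (ℓ + 1), i ≠ 0 → ψ i ((m : ℝ)⁻¹ • ρ) = (m : ℝ)⁻¹ := by
    intro i hi
    rw [(hlin i hi).map_smul, hval i hi, smul_eq_mul, mul_one]
  have key : ∀ i : Fin (ℓ + 1), i ≠ 0 → (m : ℝ) * ψ i ((m : ℝ)⁻¹ • ρ) = 1 := by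
    intro i hi
    rw [hv i hi, mul_inv_cancel₀ hmR]
  have hrel' := hrel ((m : ℝ)⁻¹ • ρ)
  rw [Fin.sum_univ_succAbove _ 0] at hrel'
  rw [Finset.sum_congr rfl fun i _ =>
      congrArg (fun x => ((b ((0:Fin (ℓ+1)).succAbove i) : ℝ) * x))
        (hv _ (Fin.succAbove_ne 0 i))] at hrel'
  rw [hb0] at hrel'
  set S : ℝ := ∑ i : Fin ℓ, (b ((0:Fin (ℓ+1)).succAbove i) : ℝ) with hS
  have hpsi0 : ψ 0 ((m : ℝ)⁻¹ • ρ) = 1 / e - S * (m : ℝ)⁻¹ := by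
    push_cast at hrel'
    rw [← Finset.sum_mul] at hrel'
    linarith [hrel']
  have hsum : (∑ i, (b i : ℝ)) = 1 + S := by
    rw [Fin.sum_univ_succAbove (fun i => (b i : ℝ)) 0, hb0, hS]; norm_num
  refine ⟨key, ?_, ?_⟩
  · rw [hpsi0, hsum]
    field_simp
    ring
  · intro hme
    have hmr : (m : ℝ) = (e : ℝ) * (1 + S) := by
      rw [← hsum]
      exact_mod_cast congrArg (Nat.cast : ℕ → ℝ) hme
    rw [hpsi0, hmr]
    field_simp
    have hS0 : (0:ℝ) ≤ S := by rw [hS]; positivity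
    have hne : (1:ℝ) + S ≠ 0 := by linarith
    have hX : (1 + S) * (S / (1 + S)) = S := by field_simp
    linear_combination (-1 : ℝ) * hX
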